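/- Let F be a field and A a unital associative F-algebra that also carries a coassociative counital F-coalgebra structure with comultiplication Δ : A → A ⊗ A and counit ε : A → F, such that Δ(1) = 1 ⊗ 1. Let β : A × A → F be a compatible pairing with β(a, 1) = ε(a) for all a ∈ A, and suppose β is anisotropic: β(x, x) ≠ 0 for every x ≠ 0. Let V = Prim(A). Then F·1 ∩ V = {0} and (F·1 + V) ∩ (Σ_{k≥2} V^k) = {0}; in particular the sum (F·1 ⊕ V) + Σ_{k≥2} V^k is direct. -/

import Mathlib

open TensorProduct

/-- The subspace of primitive elements of `A`: those `x` with
`Δ(x) = x ⊗ 1 + 1 ⊗ x`. -/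
def PrimSubmodule (F A : Type*) [Field F] [Ring A] [Algebra F A]
    [Coalgebra F A] : Submodule F A where
  carrier := {x | Coalgebra.comul x = x ⊗ₜ[F] (1 : A) + (1 : A) ⊗ₜ[F] x}
  add_mem' := by
    intro a b ha hb
    simp only [Set.mem_setOf_eq] at *
    rw [map_add, ha, hb, TensorProduct.add_tmul, TensorProduct.tmul_add]
    abel
  zero_mem' := by simp
  smul_mem' := by
    intro c a ha
    simp only [Set.mem_setOf_eq] at *
    rw [map_smul, ha, smul_add, TensorProduct.smul_tmul', ← TensorProduct.tmul_smul]

/-- Let `A` be both a unital `F`-algebra and an `F`-coalgebra with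
`Δ(1) = 1 ⊗ 1`, and let `β` be a compatible pairing with `β(a, 1) = ε(a)` which is
anisotropic. Then, with `V = Prim(A)`, one has `F·1 ∩ V = {0}` and
`(F·1 + V) ∩ (Σ_{k ≥ 2} V^k) = {0}`; in particular the sum `(F·1 ⊕ V) + Σ_{k≥2} V^k`
is direct. -/
theorem statement8 (F A : Type*) [Field F] [Ring A] [Algebra F A] [Coalgebra F A]
    (hone : Coalgebra.comul (1 : A) = (1 : A) ⊗ₜ[F] (1 : A))
    (β : A →ₗ[F] A →ₗ[F] F)
    -- compatibility: `β(a·a', c) = Σ β(a, c₍₂₎)·β(a', c₍₁₎)`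
    (hmul : ∀ a a' c : A, β (a * a') c =
      TensorProduct.lift ((LinearMap.mul F F).compl₁₂ (β a') (β a))
        (Coalgebra.comul c))
    -- `ε(c) = β(1, c)`
    (hcounit : ∀ c : A, Coalgebra.counit c = β 1 c)
    -- `β(a, 1) = ε(a)`
    (hright : ∀ a : A, β a 1 = Coalgebra.counit a)
    -- anisotropy: `β(x, x) ≠ 0` for `x ≠ 0`
    (haniso : ∀ x : A, x ≠ 0 → β x x ≠ 0) :
    (1 : Submodule F A) ⊓ PrimSubmodule F A = ⊥
    ∧ ((1 : Submodule F A) ⊔ PrimSubmodule F A) ⊓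
        (⨆ k : ℕ, (PrimSubmodule F A) ^ (k + 2)) = ⊥ := by

  classical
  by_cases htriv : (1 : A) = 0
  · have hall : ∀ x : A, x = 0 := fun x => by rw [← mul_one x, htriv, mul_zero]
    constructor <;>
      (rw [Submodule.eq_bot_iff]; intro x _; exact hall x)
  · haveI : Nontrivial A := nontrivial_of_ne 1 0 htriv
    have hinj : Function.Injective (algebraMap F A) := (algebraMap F A).injective
    set V := PrimSubmodule F A with hV
    have heps1 : Coalgebra.counit (R := F) (1 : A) = 1 := by
      have h := Coalgebra.rTensor_counit_comul (R := F) (1 : A)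
      rw [hone] at h
      have h2 := congrArg (TensorProduct.lid F A) h
      simp only [LinearMap.rTensor_tmul, TensorProduct.lid_tmul, one_smul] at h2
      apply hinj
      rw [Algebra.algebraMap_eq_smul_one, Algebra.algebraMap_eq_smul_one, h2, one_smul]
    have hepsV : ∀ x ∈ V, Coalgebra.counit (R := F) x = 0 := by
      intro x hx
      have h := Coalgebra.rTensor_counit_comul (R := F) x
      rw [show Coalgebra.comul x = x ⊗ₜ[F] (1 : A) + (1 : A) ⊗ₜ[F] x from hx] at h
      have h2 := congrArg (TensorProduct.lid F A) h
      simp only [map_add, LinearMap.rTensor_tmul, TensorProduct.lid_tmul, heps1,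
        one_smul] at h2
      have h3 : Coalgebra.counit (R := F) x • (1 : A) = 0 :=
        add_eq_right.mp h2
      apply hinj
      rw [Algebra.algebraMap_eq_smul_one, h3, map_zero]
    have β1x : ∀ x ∈ V, β 1 x = 0 := fun x hx => by rw [← hcounit]; exact hepsV x hx
    have βx1 : ∀ x ∈ V, β x 1 = 0 := fun x hx => by rw [hright]; exact hepsV x hx
    have hmul1 : ∀ a b : A, β (a * b) 1 = β b 1 * β a 1 := by
      intro a b
      rw [hmul, hone]
      simp [LinearMap.mul_apply']
    have Lε : ∀ n : ℕ, ∀ z ∈ V ^ (n + 1), β z 1 = 0 := by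
      intro n
      induction n with
      | zero => intro z hz; rw [pow_one] at hz; exact βx1 z hz
      | succ n ih =>
        intro z hz
        rw [pow_succ'] at hz
        refine Submodule.mul_induction_on hz (fun m hm n' hn' => ?_) (fun x y hx hy => ?_)
        · rw [hmul1, ih n' hn', zero_mul]
        · rw [map_add, LinearMap.add_apply, hx, hy, add_zero]
    have hS : ∀ c ∈ (1 : Submodule F A) ⊔ V, Coalgebra.comul c =
        c ⊗ₜ[F] (1 : A) + (1 : A) ⊗ₜ[F] c - β 1 c • ((1 : A) ⊗ₜ[F] (1 : A)) := by
      intro c hc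
      obtain ⟨y, hy, v, hv, rfl⟩ := Submodule.mem_sup.1 hc
      obtain ⟨r, rfl⟩ := Submodule.mem_one.1 hy
      have hβ : β 1 (algebraMap F A r + v) = r := by
        rw [map_add, ← hcounit, ← hcounit, hepsV v hv, add_zero,
          Algebra.algebraMap_eq_smul_one, map_smul, heps1, smul_eq_mul, mul_one]
      rw [hβ, Algebra.algebraMap_eq_smul_one, map_add, map_smul, hone,
        show Coalgebra.comul v = v ⊗ₜ[F] (1 : A) + (1 : A) ⊗ₜ[F] v from hv]
      simp only [TensorProduct.add_tmul, TensorProduct.tmul_add,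
        TensorProduct.smul_tmul', TensorProduct.tmul_smul]
      abel
    -- key vanishing
    have Lmain : ∀ c ∈ (1 : Submodule F A) ⊔ V, ∀ z ∈ ⨆ k : ℕ, V ^ (k + 2), β z c = 0 := by
      intro c hc z hz
      refine Submodule.iSup_induction (motive := fun z => β z c = 0) _ hz
        (fun k z hzk => ?_) (by simp) (fun x y hx hy => by
          simp only [map_add, LinearMap.add_apply]
          rw [hx, hy, add_zero])
      rw [pow_succ'] at hzk
      refine Submodule.mul_induction_on hzk (fun m hm n' hn' => ?_) (fun x y hx hy => ?_)
      · rw [hmul, hS c hc]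
        simp only [map_add, map_sub, map_smul, TensorProduct.lift.tmul,
          LinearMap.compl₁₂_apply, LinearMap.mul_apply', LinearMap.sub_apply,
          LinearMap.add_apply]
        rw [βx1 m hm, Lε k n' hn']
        simp
      · rw [map_add, LinearMap.add_apply, hx, hy, add_zero]
    constructor
    · rw [Submodule.eq_bot_iff]
      rintro x ⟨hx1, hxV⟩
      obtain ⟨r, rfl⟩ := Submodule.mem_one.1 hx1
      have hr : β 1 (algebraMap F A r) = r := by
        rw [← hcounit, Algebra.algebraMap_eq_smul_one, map_smul, heps1, smul_eq_mul,
          mul_one]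
      rw [β1x _ hxV] at hr
      rw [← hr, map_zero]
    · rw [Submodule.eq_bot_iff]
      rintro x ⟨hx1, hx2⟩
      by_contra h0
      exact haniso x h0 (Lmain x hx1 x hx2)
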